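/- Let M, N, J be positive integers with J ≤ N and M ≤ N - ⌊N/J⌋. Let h_1, ..., h_N ∈ ℂ^M be such that any M of them are linearly independent. Then for any pairwise disjoint nonempty sets Λ_1, ..., Λ_J ⊆ {1,...,N}, there exists an index j* such that the only w ∈ ℂ^M with h_n^H w = 0 for all n ∉ Λ_{j*} is w = 0. -/
import Mathlib


/-- Converse: with generic channels, if M ≤ N - ⌊N/J⌋ then for any pairwise
    disjoint nonempty groups some data stream admits only the zero
    beamformer. -/
theorem converse_beamformers (M N J : ℕ) (hM : 0 < M) (hJ : 0 < J)
    (hJN : J ≤ N) (hinfeas : M ≤ N - N / J)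
    (h : Fin N → Fin M → ℂ)
    (hgen : ∀ s : Finset (Fin N), s.card = M →
      LinearIndependent ℂ (fun i : s => h i))
    (Λ : Fin J → Finset (Fin N))
    (hdisj : ∀ i j : Fin J, i ≠ j → Disjoint (Λ i) (Λ j))
    (hne : ∀ j : Fin J, (Λ j).Nonempty) :
    ∃ j : Fin J, ∀ w : Fin M → ℂ,
      (∀ n : Fin N, n ∉ Λ j →
        ∑ m : Fin M, (starRingEnd ℂ) (h n m) * w m = 0) → w = 0 := by
  -- pigeonhole: some group has card ≤ N / J
  have hpig : ∃ j : Fin J, (Λ j).card ≤ N / J := by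
    by_contra hcon
    push_neg at hcon
    have hsum : ∑ j : Fin J, (Λ j).card ≤ N := by
      classical
      rw [← Finset.card_biUnion (fun i _ j _ hij => hdisj i j hij)]
      simpa using (Finset.card_le_card (Finset.subset_univ _)).trans_eq
        (by simp : (Finset.univ : Finset (Fin N)).card = N)
    have hlb : J * (N / J + 1) ≤ ∑ j : Fin J, (Λ j).card := by
      calc J * (N / J + 1) = ∑ _j : Fin J, (N / J + 1) := by
            simp [Finset.sum_const, mul_comm]
        _ ≤ ∑ j : Fin J, (Λ j).card :=
            Finset.sum_le_sum fun j _ => hcon j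
    have : N < J * (N / J + 1) := Nat.lt_mul_div_succ N hJ
    omega
  obtain ⟨j, hj⟩ := hpig
  refine ⟨j, fun w hw => ?_⟩
  classical
  -- complement has at least M elements
  have hcard : M ≤ (Λ j)ᶜ.card := by
    have := Finset.card_compl (Λ j)
    simp only [Fintype.card_fin] at this
    omega
  obtain ⟨s, hs_sub, hs_card⟩ := Finset.exists_subset_card_eq hcard
  -- build the square matrix of conjugated channels
  let e : (s : Finset (Fin N)) ≃ Fin M := s.equivFinOfCardEq hs_card
  have hli : LinearIndependent ℂ (fun k : Fin M => h ((e.symm k) : Fin N)) :=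
    (hgen s hs_card).comp e.symm e.symm.injective
  let B : Matrix (Fin M) (Fin M) ℂ := Matrix.of fun k m => h ((e.symm k) : Fin N) m
  have hB : IsUnit B := Matrix.linearIndependent_rows_iff_isUnit.mp hli
  let B' : Matrix (Fin M) (Fin M) ℂ := B.map (starRingEnd ℂ)
  have hB' : IsUnit B' := by
    rw [Matrix.isUnit_iff_isUnit_det] at hB ⊢
    have : B'.det = (starRingEnd ℂ) B.det := (RingHom.map_det (starRingEnd ℂ) B).symm
    rw [this]
    exact hB.map (starRingEnd ℂ)
  have hmul : B'.mulVec w = 0 := by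
    funext k
    have hns : ((e.symm k : s) : Fin N) ∉ Λ j := by
      have := hs_sub (e.symm k).2
      simpa [Finset.mem_compl] using this
    simpa [Matrix.mulVec, dotProduct, B', B] using hw _ hns
  have : B'.mulVec w = B'.mulVec 0 := by simp [hmul]
  exact Matrix.mulVec_injective_iff_isUnit.mpr hB' this
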